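/- Let T₁, T₂ be X-trees and χ an optimal convex character for (T₁,T₂), convex on T₁, with |χ| ≥ 7·d_MP(T₁,T₂) − 4 states. Then the homoplasy score of χ on T₂ equals exactly d_MP(T₁,T₂); consequently, in the forest F₂ induced by any most parsimonious extension of χ to T₂, there are at least |χ| − d_MP unique states and at most 2·d_MP repeating components. -/

import Mathlib

open SimpleGraph

namespace PhyloMP

/-- The set of mutation edges of a vertex coloring `ω` of a graph:
edges whose two endpoints receive different states. -/
def mutationEdges {V C : Type} (g : SimpleGraph V) (ω : V → C) : Set (Sym2 V) :=
  {e | e ∈ g.edgeSet ∧ ∃ u v : V, e = s(u, v) ∧ ω u ≠ ω v}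

/-- An unrooted binary phylogenetic tree on taxon set `X`, with vertex set `V`:
a tree whose degree-1 vertices (leaves) are bijectively labeled by `X` and whose
other vertices have degree 3. -/
structure XTree (X V : Type) [Fintype V] where
  g : SimpleGraph V
  isTree : g.IsTree
  leaf : X → V
  leafInj : Function.Injective leaf
  leafDeg : ∀ x, (g.neighborSet (leaf x)).ncard = 1
  leavesOnly : ∀ v, (g.neighborSet v).ncard = 1 → ∃ x, leaf x = v
  internalDeg : ∀ v, (g.neighborSet v).ncard ≠ 1 → (g.neighborSet v).ncard = 3

variable {X V C : Type} [Fintype V]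

/-- `ω` extends the character `χ` to all vertices of `T`. -/
def IsExtension (T : XTree X V) (χ : X → C) (ω : V → C) : Prop :=
  ∀ x, ω (T.leaf x) = χ x

/-- The parsimony score `ℓ(T,χ)`: the minimum number of mutation edges over
all extensions of `χ` to `T`. -/
noncomputable def score (T : XTree X V) (χ : X → C) : ℕ :=
  sInf {n | ∃ ω : V → C, IsExtension T χ ω ∧ (mutationEdges T.g ω).ncard = n}

/-- A most parsimonious extension. -/
def IsMPExtension (T : XTree X V) (χ : X → C) (ω : V → C) : Prop :=
  IsExtension T χ ω ∧ (mutationEdges T.g ω).ncard = score T χ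

/-- `|χ|`: the number of states used by the character `χ`. -/
noncomputable def nStates {X C : Type} (χ : X → C) : ℕ := (Set.range χ).ncard

/-- `χ` is convex on `T`: its parsimony score equals its number of states minus one. -/
def IsConvex (T : XTree X V) (χ : X → C) : Prop := score T χ = nStates χ - 1

/-- The maximum parsimony distance between two `X`-trees. -/
noncomputable def dMP {V₁ V₂ : Type} [Fintype V₁] [Fintype V₂]
    (T₁ : XTree X V₁) (T₂ : XTree X V₂) : ℕ :=
  sSup {d | ∃ χ : X → ℕ, Nat.dist (score T₁ χ) (score T₂ χ) = d}

/-- A character achieving the maximum parsimony distance. -/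
def IsOptimal {V₁ V₂ : Type} [Fintype V₁] [Fintype V₂]
    (T₁ : XTree X V₁) (T₂ : XTree X V₂) (χ : X → C) : Prop :=
  Nat.dist (score T₁ χ) (score T₂ χ) = dMP T₁ T₂

/-- The forest induced by an extension `ω`: delete all mutation edges of `ω` from `T`. -/
noncomputable def forest (T : XTree X V) (ω : V → C) : SimpleGraph V :=
  T.g.deleteEdges (mutationEdges T.g ω)

/-- A connected component `c` of the forest `F` carries the state `s`. -/
def carries {V C : Type} (F : SimpleGraph V) (ω : V → C) (c : F.ConnectedComponent) (s : C) : Prop :=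
  ∃ v, F.connectedComponentMk v = c ∧ ω v = s

/-- The number of components of `F` carrying the state `s`. A state is *unique*
if this is 1 and *repeating* if this is at least 2. -/
noncomputable def stateMultiplicity {V C : Type} (F : SimpleGraph V) (ω : V → C) (s : C) : ℕ :=
  {c : F.ConnectedComponent | carries F ω c s}.ncard

/-- Relabel the state `A` as `B` in the character `χ`. -/
def relabel {X C : Type} [DecidableEq C] (χ : X → C) (A B : C) : X → C :=
  fun x => if χ x = A then B else χ x

/-- Two states `A`, `B` are adjacent (with respect to the coloring `ω`) if some edge of the
graph joins a vertex colored `A` to a vertex colored `B`; for distinct states, this edge is a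
mutation edge joining the corresponding components of the induced forest. -/
def statesAdjacent {V C : Type} (g : SimpleGraph V) (ω : V → C) (A B : C) : Prop :=
  ∃ u v, g.Adj u v ∧ ω u = A ∧ ω v = B

end PhyloMP

section AuxLemmas

open SimpleGraph PhyloMP

private lemma reach_color_eq {V C : Type} {G : SimpleGraph V} {ω : V → C}
    (hadj : ∀ u v, G.Adj u v → ω u = ω v) {u v : V} (h : G.Reachable u v) : ω u = ω v := by
  obtain ⟨p⟩ := h
  induction p with
  | nil => rfl
  | cons h q ih => exact (hadj _ _ h).trans ih

private lemma reach_decomp {V : Type} {G : SimpleGraph V} {a b u v : V}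
    (h : G.Reachable u v) :
    (G.deleteEdges {s(a,b)}).Reachable u v ∨
    ((G.deleteEdges {s(a,b)}).Reachable u a ∧ (G.deleteEdges {s(a,b)}).Reachable b v) ∨
    ((G.deleteEdges {s(a,b)}).Reachable u b ∧ (G.deleteEdges {s(a,b)}).Reachable a v) := by
  obtain ⟨p⟩ := h
  induction p with
  | nil => exact Or.inl (Reachable.refl _)
  | @cons u w v hadj q ih =>
    by_cases he : s(u,w) = s(a,b)
    · rw [Sym2.eq_iff] at he
      rcases he with ⟨ha, hb⟩ | ⟨ha, hb⟩
      · subst ha; subst hb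
        rcases ih with h1 | ⟨h2a, h2b⟩ | ⟨h3a, h3b⟩
        · exact Or.inr (Or.inl ⟨Reachable.refl _, h1⟩)
        · exact Or.inl (h2a.symm.trans h2b)
        · exact Or.inl h3b
      · subst ha; subst hb
        rcases ih with h1 | ⟨h2a, h2b⟩ | ⟨h3a, h3b⟩
        · exact Or.inr (Or.inr ⟨Reachable.refl _, h1⟩)
        · exact Or.inl h2b
        · exact Or.inl (h3a.symm.trans h3b)
    · have hHadj : (G.deleteEdges {s(a,b)}).Adj u w := by
        rw [SimpleGraph.deleteEdges_adj]
        exact ⟨hadj, by simpa using he⟩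
      rcases ih with h1 | ⟨h2a, h2b⟩ | ⟨h3a, h3b⟩
      · exact Or.inl (hHadj.reachable.trans h1)
      · exact Or.inr (Or.inl ⟨hHadj.reachable.trans h2a, h2b⟩)
      · exact Or.inr (Or.inr ⟨hHadj.reachable.trans h3a, h3b⟩)

private lemma card_cc_deleteEdge_le {V : Type} [Finite V] (G : SimpleGraph V) (e : Sym2 V) :
    Nat.card (G.deleteEdges {e}).ConnectedComponent ≤ Nat.card G.ConnectedComponent + 1 := by
  classical
  induction e using Sym2.ind with
  | _ a b =>
    set H := G.deleteEdges {s(a,b)} with hHdef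
    let cmap : H.ConnectedComponent → G.ConnectedComponent :=
      ConnectedComponent.lift (fun v => G.connectedComponentMk v)
        (fun v w p _ =>
          ConnectedComponent.eq.mpr (Reachable.mono (SimpleGraph.deleteEdges_le _) ⟨p⟩))
    haveI : Finite G.ConnectedComponent := Quot.finite _
    haveI : Finite H.ConnectedComponent := Quot.finite _
    haveI := Fintype.ofFinite G.ConnectedComponent
    let ψ : H.ConnectedComponent → Option G.ConnectedComponent :=
      fun c => if c = H.connectedComponentMk a then none else some (cmap c)
    have hinj : Function.Injective ψ := by
      intro c₁ c₂ hψ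
      by_cases h1 : c₁ = H.connectedComponentMk a
      · by_cases h2 : c₂ = H.connectedComponentMk a
        · rw [h1, h2]
        · simp [ψ, h1, h2] at hψ
      · by_cases h2 : c₂ = H.connectedComponentMk a
        · simp [ψ, h1, h2] at hψ
        · simp only [ψ, if_neg h1, if_neg h2, Option.some_inj] at hψ
          revert hψ h1 h2
          refine ConnectedComponent.ind₂ (fun u v => ?_) c₁ c₂
          intro h1 h2 hψ
          have hr : G.Reachable u v := ConnectedComponent.eq.mp hψ
          rcases reach_decomp (a := a) (b := b) hr with h' | ⟨hua, _⟩ | ⟨_, hav⟩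
          · exact ConnectedComponent.eq.mpr h'
          · exact absurd (ConnectedComponent.eq.mpr hua) h1
          · exact absurd (ConnectedComponent.eq.mpr hav.symm) h2
    calc Nat.card H.ConnectedComponent
        ≤ Nat.card (Option G.ConnectedComponent) := Nat.card_le_card_of_injective ψ hinj
      _ = Nat.card G.ConnectedComponent + 1 := Finite.card_option

private lemma card_cc_deleteEdges_le {V : Type} [Finite V] (G : SimpleGraph V)
    (E : Set (Sym2 V)) :
    Nat.card (G.deleteEdges E).ConnectedComponent ≤ Nat.card G.ConnectedComponent + E.ncard := by
  have hfin : E.Finite := Set.toFinite E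
  refine Set.Finite.induction_on (motive := fun E _ =>
    Nat.card (G.deleteEdges E).ConnectedComponent ≤ Nat.card G.ConnectedComponent + E.ncard)
    E hfin (by simp) ?_
  intro e E' hnot hfin' ih
  · have heq : G.deleteEdges (insert e E') = (G.deleteEdges E').deleteEdges {e} := by
      rw [SimpleGraph.deleteEdges_deleteEdges, Set.union_singleton]
    calc Nat.card (G.deleteEdges (insert e E')).ConnectedComponent
        = Nat.card ((G.deleteEdges E').deleteEdges {e}).ConnectedComponent := by rw [heq]
      _ ≤ Nat.card (G.deleteEdges E').ConnectedComponent + 1 := card_cc_deleteEdge_le _ _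
      _ ≤ Nat.card G.ConnectedComponent + E'.ncard + 1 := by omega
      _ = Nat.card G.ConnectedComponent + (insert e E').ncard := by
          rw [Set.ncard_insert_of_notMem hnot hfin']
          omega

private lemma card_cc_connected {V : Type} {G : SimpleGraph V} (h : G.Connected) :
    Nat.card G.ConnectedComponent = 1 := by
  haveI : Subsingleton G.ConnectedComponent :=
    ⟨ConnectedComponent.ind₂ fun u v => ConnectedComponent.eq.mpr (h.preconnected u v)⟩
  haveI : Nonempty G.ConnectedComponent := ⟨G.connectedComponentMk h.nonempty.some⟩
  exact Nat.card_eq_one_iff_unique.mpr ⟨‹_›, ‹_›⟩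

private lemma forest_const {V C : Type} (g : SimpleGraph V) (ω : V → C) :
    ∀ u v, (g.deleteEdges (mutationEdges g ω)).Adj u v → ω u = ω v := by
  intro u v h
  rw [SimpleGraph.deleteEdges_adj] at h
  by_contra hne
  exact h.2 ⟨(SimpleGraph.mem_edgeSet g).mpr h.1, u, v, rfl, hne⟩

private lemma xtree_nonempty_X {X V : Type} [Fintype V] (T : XTree X V) : Nonempty X := by
  classical
  have hV : Nonempty V := T.isTree.isConnected.nonempty
  by_contra hX
  have hdeg : ∀ v : V, (T.g.neighborSet v).ncard = 3 := by
    intro v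
    refine T.internalDeg v fun h1 => ?_
    obtain ⟨x, _⟩ := T.leavesOnly v h1
    exact hX ⟨x⟩
  haveI : DecidableRel T.g.Adj := Classical.decRel _
  have hsum : ∑ v : V, T.g.degree v = 2 * T.g.edgeFinset.card :=
    T.g.sum_degrees_eq_twice_card_edges
  have hcard : T.g.edgeFinset.card + 1 = Fintype.card V := T.isTree.card_edgeFinset
  have hd : ∀ v : V, T.g.degree v = 3 := by
    intro v
    have h := hdeg v
    rwa [Set.ncard_eq_toFinset_card', Set.toFinset_card,
      SimpleGraph.card_neighborSet_eq_degree] at h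
  have hsum3 : ∑ v : V, T.g.degree v = 3 * Fintype.card V := by
    simp [hd, Finset.sum_const, Finset.card_univ, mul_comm]
  have hpos : 1 ≤ Fintype.card V := Fintype.card_pos
  omega

/-- Any extension uses at least `nStates χ - 1` mutation edges;
more precisely general stats about the induced forest. -/
private lemma ext_lower {X V C : Type} [Fintype V] (T : XTree X V) (χ : X → C) (ω : V → C)
    (hω : IsExtension T χ ω) :
    nStates χ ≤ (mutationEdges T.g ω).ncard + 1 := by
  classical
  set F := T.g.deleteEdges (mutationEdges T.g ω) with hF
  haveI : Finite F.ConnectedComponent := Quot.finite _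
  let f : F.ConnectedComponent → C :=
    ConnectedComponent.lift ω (fun v w p _ => reach_color_eq (forest_const T.g ω) ⟨p⟩)
  have h2 : Set.range χ ⊆ Set.range f := by
    rintro s ⟨x, rfl⟩
    exact ⟨F.connectedComponentMk (T.leaf x), hω x⟩
  have h3 : (Set.range f).ncard ≤ Nat.card F.ConnectedComponent := by
    rw [← Set.image_univ, ← Set.ncard_univ]
    exact Set.ncard_image_le (Set.toFinite _)
  have h1 : Nat.card F.ConnectedComponent ≤ (mutationEdges T.g ω).ncard + 1 := by
    have h := card_cc_deleteEdges_le T.g (mutationEdges T.g ω)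
    rwa [card_cc_connected T.isTree.isConnected, add_comm] at h
  calc nStates χ ≤ (Set.range f).ncard := Set.ncard_le_ncard h2 (Set.finite_range f)
    _ ≤ Nat.card F.ConnectedComponent := h3
    _ ≤ _ := h1

private lemma score_attained {X V C : Type} [Fintype V] (T : XTree X V) (χ : X → C)
    (hX : Nonempty X) : ∃ ω, IsMPExtension T χ ω := by
  classical
  obtain ⟨x₀⟩ := hX
  let ω : V → C := fun v => if h : ∃ x, T.leaf x = v then χ h.choose else χ x₀
  have hext : IsExtension T χ ω := by
    intro x
    have h : ∃ x', T.leaf x' = T.leaf x := ⟨x, rfl⟩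
    simp only [ω, dif_pos h]
    exact congrArg χ (T.leafInj h.choose_spec)
  have hne : {n | ∃ ω : V → C, IsExtension T χ ω ∧ (mutationEdges T.g ω).ncard = n}.Nonempty :=
    ⟨_, ω, hext, rfl⟩
  obtain ⟨ω', h1, h2⟩ := Nat.sInf_mem hne
  exact ⟨ω', h1, h2⟩

end AuxLemmas

open PhyloMP in
theorem stmt_14 {X V₁ V₂ C : Type} [Fintype V₁] [Fintype V₂]
    (T₁ : XTree X V₁) (T₂ : XTree X V₂) (χ : X → C)
    (hopt : IsOptimal T₁ T₂ χ) (hconv : IsConvex T₁ χ)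
    (hst : 7 * dMP T₁ T₂ - 4 ≤ nStates χ) :
    score T₂ χ + 1 - nStates χ = dMP T₁ T₂ ∧
    ∀ ω₂ : V₂ → C, IsMPExtension T₂ χ ω₂ →
      nStates χ - dMP T₁ T₂
          ≤ {s : C | stateMultiplicity (forest T₂ ω₂) ω₂ s = 1}.ncard ∧
      {c : (forest T₂ ω₂).ConnectedComponent |
          ∃ s, carries (forest T₂ ω₂) ω₂ c s ∧ 2 ≤ stateMultiplicity (forest T₂ ω₂) ω₂ s}.ncard
        ≤ 2 * dMP T₁ T₂ := by
  classical
  have hX : Nonempty X := xtree_nonempty_X T₁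
  haveI : Finite X := Finite.of_injective T₁.leaf T₁.leafInj
  have hn1 : 1 ≤ nStates χ := by
    obtain ⟨x⟩ := hX
    exact (Set.ncard_pos (Set.finite_range χ)).mpr ⟨χ x, x, rfl⟩
  -- the score on `T₂` is at least `nStates χ - 1`
  obtain ⟨ωs, hexts, hcards⟩ := score_attained T₂ χ hX
  have hlow : nStates χ ≤ score T₂ χ + 1 := by
    have h := ext_lower T₂ χ ωs hexts
    omega
  have hs1 : score T₁ χ = nStates χ - 1 := hconv
  have hge : score T₁ χ ≤ score T₂ χ := by omega
  have hdist : score T₂ χ - score T₁ χ = dMP T₁ T₂ := by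
    rw [← Nat.dist_eq_sub_of_le hge]; exact hopt
  have hpart1 : score T₂ χ + 1 - nStates χ = dMP T₁ T₂ := by omega
  refine ⟨hpart1, ?_⟩
  intro ω₂ hMP
  obtain ⟨hext₂, hcard₂⟩ := hMP
  set F := forest T₂ ω₂ with hFdef
  haveI : Finite F.ConnectedComponent := Quot.finite _
  haveI : Fintype F.ConnectedComponent := Fintype.ofFinite _
  set f : F.ConnectedComponent → C :=
    ConnectedComponent.lift ω₂ (fun v w p _ => reach_color_eq (forest_const T₂.g ω₂) ⟨p⟩)
    with hfdef
  have hfmk : ∀ v, f (F.connectedComponentMk v) = ω₂ v := fun v => rfl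
  have hcar : ∀ (c : F.ConnectedComponent) (s : C), carries F ω₂ c s ↔ f c = s := by
    intro c s
    constructor
    · rintro ⟨v, rfl, rfl⟩; rfl
    · exact ConnectedComponent.ind (β := fun c => f c = s → carries F ω₂ c s)
        (fun v h => ⟨v, rfl, h⟩) c
  have hmult : ∀ s : C, stateMultiplicity F ω₂ s
      = (Finset.univ.filter (fun c : F.ConnectedComponent => f c = s)).card := by
    intro s
    have hset : {c : F.ConnectedComponent | carries F ω₂ c s}
        = ↑(Finset.univ.filter (fun c : F.ConnectedComponent => f c = s)) := by
      ext c; simp [hcar]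
    rw [stateMultiplicity, hset, Set.ncard_coe_finset]
  set N := Fintype.card F.ConnectedComponent with hNdef
  have hN : N ≤ score T₂ χ + 1 := by
    have h := card_cc_deleteEdges_le T₂.g (mutationEdges T₂.g ω₂)
    rw [card_cc_connected T₂.isTree.isConnected] at h
    have hFc : F = T₂.g.deleteEdges (mutationEdges T₂.g ω₂) := rfl
    rw [← hFc, Nat.card_eq_fintype_card, ← hNdef] at h
    omega
  set Tfin : Finset C := Finset.univ.image f with hTdef
  have hTn : nStates χ ≤ Tfin.card := by
    have hsub : Set.range χ ⊆ ↑Tfin := by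
      rintro s ⟨x, rfl⟩
      have : χ x = f (F.connectedComponentMk (T₂.leaf x)) := (hext₂ x).symm
      rw [this]
      simp [hTdef]
    calc nStates χ ≤ (↑Tfin : Set C).ncard := Set.ncard_le_ncard hsub (Tfin.finite_toSet)
      _ = Tfin.card := Set.ncard_coe_finset _
  have hfib1 : ∀ s ∈ Tfin, 1 ≤ stateMultiplicity F ω₂ s := by
    intro s hs
    rw [hTdef, Finset.mem_image] at hs
    obtain ⟨c, _, rfl⟩ := hs
    rw [hmult]
    exact Finset.card_pos.mpr ⟨c, by simp⟩
  have hNsum : N = ∑ s ∈ Tfin, stateMultiplicity F ω₂ s := by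
    have h := Finset.card_eq_sum_card_fiberwise
      (f := f) (s := (Finset.univ : Finset F.ConnectedComponent)) (t := Tfin)
      (fun c _ => Finset.mem_image_of_mem f (Finset.mem_univ c))
    rw [Finset.card_univ] at h
    rw [hNdef, h]
    exact Finset.sum_congr rfl fun s _ => (hmult s).symm
  set U' : Finset C := Tfin.filter (fun s => stateMultiplicity F ω₂ s = 1) with hU'def
  set R' : Finset C := Tfin.filter (fun s => ¬ stateMultiplicity F ω₂ s = 1) with hR'def
  have hUR : U'.card + R'.card = Tfin.card :=
    Finset.card_filter_add_card_filter_not _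
  have hsplit : ∑ s ∈ Tfin, stateMultiplicity F ω₂ s
      = (∑ s ∈ U', stateMultiplicity F ω₂ s) + ∑ s ∈ R', stateMultiplicity F ω₂ s :=
    (Finset.sum_filter_add_sum_filter_not _ _ _).symm
  have hUsum : ∑ s ∈ U', stateMultiplicity F ω₂ s = U'.card := by
    rw [Finset.sum_congr rfl (fun s hs => (Finset.mem_filter.mp hs).2)]
    simp
    rfl
  have hRsum : 2 * R'.card ≤ ∑ s ∈ R', stateMultiplicity F ω₂ s := by
    have h := Finset.card_nsmul_le_sum R' (fun s => stateMultiplicity F ω₂ s) 2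
      (fun s hs => by
        obtain ⟨hsT, hs1⟩ := Finset.mem_filter.mp hs
        have hs1' : stateMultiplicity F ω₂ s ≠ 1 := hs1
        have h1 := hfib1 s hsT
        show 2 ≤ stateMultiplicity F ω₂ s
        omega)
    simpa [mul_comm] using h
  have hUset : {s : C | stateMultiplicity F ω₂ s = 1} = ↑U' := by
    ext s
    simp only [Set.mem_setOf_eq, hU'def, Finset.coe_filter, Set.mem_setOf_eq]
    refine ⟨fun h => ⟨?_, h⟩, fun h => h.2⟩
    have hpos : 0 < (Finset.univ.filter (fun c : F.ConnectedComponent => f c = s)).card := by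
      rw [← hmult]; omega
    obtain ⟨c, hc⟩ := Finset.card_pos.mp hpos
    rw [hTdef, Finset.mem_image]
    exact ⟨c, Finset.mem_univ c, (Finset.mem_filter.mp hc).2⟩
  have hUcard : {s : C | stateMultiplicity F ω₂ s = 1}.ncard = U'.card := by
    rw [hUset, Set.ncard_coe_finset]
  have hkey : nStates χ ≤ U'.card + R'.card := by omega
  have hkey2 : U'.card + 2 * R'.card ≤ N := by omega
  constructor
  · omega
  · -- repeating components
    set RepF : Finset F.ConnectedComponent :=
      Finset.univ.filter (fun c => 2 ≤ stateMultiplicity F ω₂ (f c)) with hRepdef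
    have hRepset : {c : F.ConnectedComponent |
        ∃ s, carries F ω₂ c s ∧ 2 ≤ stateMultiplicity F ω₂ s} = ↑RepF := by
      ext c
      simp only [Set.mem_setOf_eq, hRepdef, Finset.coe_filter, Finset.mem_univ, true_and,
        Set.mem_setOf_eq]
      constructor
      · rintro ⟨s, hcs, hs2⟩
        rwa [(hcar c s).mp hcs]
      · intro h
        exact ⟨f c, (hcar c (f c)).mpr rfl, h⟩
    set UF : Finset F.ConnectedComponent :=
      Finset.univ.filter (fun c => ¬ 2 ≤ stateMultiplicity F ω₂ (f c)) with hUFdef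
    have hcfib : ∀ c : F.ConnectedComponent, 1 ≤ stateMultiplicity F ω₂ (f c) := by
      intro c
      rw [hmult]
      exact Finset.card_pos.mpr ⟨c, by simp⟩
    have hRepUF : RepF.card + UF.card = N := by
      rw [hRepdef, hUFdef, Finset.card_filter_add_card_filter_not, Finset.card_univ]
    have hUFcard : UF.card = U'.card := by
      refine Finset.card_bij (fun c _ => f c) ?_ ?_ ?_
      · intro c hc
        rw [hUFdef, Finset.mem_filter] at hc
        have hc2 : ¬ 2 ≤ stateMultiplicity F ω₂ (f c) := hc.2
        have h1 := hcfib c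
        rw [hU'def, Finset.mem_filter]
        refine ⟨?_, ?_⟩
        · rw [hTdef]
          exact Finset.mem_image_of_mem f (Finset.mem_univ c)
        · show stateMultiplicity F ω₂ (f c) = 1
          omega
      · intro c₁ h₁ c₂ h₂ hf
        rw [hUFdef, Finset.mem_filter] at h₁
        have h₁2 : ¬ 2 ≤ stateMultiplicity F ω₂ (f c₁) := h₁.2
        have h1 : stateMultiplicity F ω₂ (f c₁) = 1 := by
          have := hcfib c₁; omega
        rw [hmult] at h1
        refine Finset.card_le_one.mp (le_of_eq h1) c₁ ?_ c₂ ?_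
        · simp
        · simp [hf]
      · intro s hs
        rw [hU'def, Finset.mem_filter] at hs
        obtain ⟨hsT, hs1⟩ := hs
        have hs1' : stateMultiplicity F ω₂ s = 1 := hs1
        have hpos : 0 < (Finset.univ.filter (fun c : F.ConnectedComponent => f c = s)).card := by
          rw [← hmult]; omega
        obtain ⟨c, hc⟩ := Finset.card_pos.mp hpos
        have hcs : f c = s := (Finset.mem_filter.mp hc).2
        refine ⟨c, ?_, hcs⟩
        rw [hUFdef, Finset.mem_filter]
        refine ⟨Finset.mem_univ c, ?_⟩
        show ¬ 2 ≤ stateMultiplicity F ω₂ (f c)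
        rw [hcs, hs1']
        omega
    rw [hRepset, Set.ncard_coe_finset]
    omega
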